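/- Let (T, [−,−,−], ·) be a truss and e, f ∈ T. Then the translation map τ_e^f : T → T, a ↦ [a, e, f], is a ring isomorphism from R(T;e) to R(T;f); that is, τ_e^f is a bijection, τ_e^f(a +_e b) = τ_e^f(a) +_f τ_e^f(b), and τ_e^f(a ∘_e b) = τ_e^f(a) ∘_f τ_e^f(b) for all a, b ∈ T. -/
import Mathlib


/-- The retract addition `a +_e b := [a, e, b]` of a truss at `e`. -/
def tadd {T : Type*} (br : T → T → T → T) (e a b : T) : T := br a e b

/-- The ring multiplication `a ∘_e b := [[a·b, a·e, e], [e·b, e·e, e], e]` on the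
retract of a truss at `e`. -/
def tcirc {T : Type*} (br : T → T → T → T) (mul : T → T → T) (e a b : T) : T :=
  br (br (mul a b) (mul a e) e) (br (mul e b) (mul e e) e) e

/-- For any truss `(T, [−,−,−], ·)` and `e, f ∈ T`, the translation
`τ_e^f : a ↦ [a, e, f]` is a ring isomorphism `R(T;e) → R(T;f)`. -/
theorem truss_translation_ring_iso {T : Type*} (br : T → T → T → T)
    (mul : T → T → T)
    (hassoc : ∀ a b c d g : T, br a b (br c d g) = br (br a b c) d g)
    (hml : ∀ a b : T, br a a b = b)
    (hmr : ∀ a b : T, br a b b = a)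
    (hcomm : ∀ a b c : T, br a b c = br c b a)
    (hmulassoc : ∀ a b c : T, mul (mul a b) c = mul a (mul b c))
    (hdistl : ∀ a b c d : T, mul a (br b c d) = br (mul a b) (mul a c) (mul a d))
    (hdistr : ∀ a b c d : T, mul (br a b c) d = br (mul a d) (mul b d) (mul c d))
    (e f : T) :
    (Function.Bijective (fun a : T => br a e f)) ∧
    (∀ a b : T, br (tadd br e a b) e f = tadd br f (br a e f) (br b e f)) ∧
    (∀ a b : T,
      br (tcirc br mul e a b) e f = tcirc br mul f (br a e f) (br b e f)) := by
  letI : Add T := ⟨fun x y => br x e y⟩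
  letI : Zero T := ⟨e⟩
  letI : Neg T := ⟨fun x => br e x e⟩
  letI : AddCommGroup T :=
    { add := fun x y => br x e y
      zero := e
      neg := fun x => br e x e
      nsmul := nsmulRec
      zsmul := zsmulRec
      add_assoc := fun x y z => (hassoc x e y e z).symm
      zero_add := fun x => hml e x
      add_zero := fun x => hmr x e
      neg_add_cancel := fun x => by
        show br (br e x e) e x = e
        rw [← hassoc e x e e x, hml e x, hmr e x]
      add_comm := fun x y => hcomm x e y }
  have hadd : ∀ x y : T, x + y = br x e y := fun _ _ => rfl
  have hneg : ∀ x : T, -x = br e x e := fun _ => rfl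
  have hbr : ∀ x y z : T, br x y z = x - y + z := by
    intro x y z
    rw [sub_eq_add_neg, hadd, hadd, hneg, hassoc x e e y e, hmr x e,
      ← hassoc x y e e z, hml e z]
  refine ⟨?_, ?_, ?_⟩
  · refine ⟨fun a b h => ?_, fun b => ⟨br b f e, ?_⟩⟩
    · have := congrArg (fun x => br x f e) h
      simpa [← hassoc, hml, hmr] using this
    · simp only
      rw [← hassoc b f e e f, hml, hmr]
  · intro a b
    simp only [tadd, hbr]
    abel
  · intro a b
    simp only [tcirc, hdistl, hdistr]
    simp only [hbr]
    abel
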